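/- Let G : Ω → ℝ where Ω = ∏_{i=1}^n Ω_i is a product of finite sets, let P be a product probability distribution on Ω, and fix e ∈ Ω. For S ⊆ {1,…,n}, define E[G|S] = ∑_{ω∈Ω} G(ω) · ∏_{i∈S} δ_i(ω_i) · ∏_{i∉S} P_i(ω_i), where δ_i(ω_i) = 1 if ω_i = e_i and 0 otherwise. Let c_k = ∑_{S : |S|=k} E[G|S]. For z ≥ 0, define the tilted product distribution P^z with marginals P^z_i(ω_i) = (z·δ_i(ω_i) + P_i(ω_i))/(1+z). Then ∑_{k=0}^{n} c_k z^k = (1+z)^n · E_{P^z}[G]. -/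

import Mathlib

open Finset

/-- `E[G|S]`: conditional expectation of `G` given that features in `S` take the
reference values `e`. -/
noncomputable def condExp {n : ℕ} {Ω : Fin n → Type*} [∀ i, Fintype (Ω i)]
    [∀ i, DecidableEq (Ω i)] (P : ∀ i, Ω i → ℝ) (e : ∀ i, Ω i)
    (G : (∀ i, Ω i) → ℝ) (S : Finset (Fin n)) : ℝ :=
  ∑ ω : ∀ i, Ω i, G ω * (∏ i ∈ S, if ω i = e i then (1 : ℝ) else 0) * ∏ i ∈ Sᶜ, P i (ω i)

theorem generating_function_lemma {n : ℕ} {Ω : Fin n → Type*} [∀ i, Fintype (Ω i)]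
    [∀ i, Nonempty (Ω i)] [∀ i, DecidableEq (Ω i)]
    (P : ∀ i, Ω i → ℝ) (hP0 : ∀ i x, 0 ≤ P i x) (hP1 : ∀ i, ∑ x, P i x = 1)
    (e : ∀ i, Ω i) (G : (∀ i, Ω i) → ℝ) (z : ℝ) (hz : 0 ≤ z) :
    ∑ k ∈ Finset.range (n + 1),
        (∑ S ∈ Finset.powersetCard k (Finset.univ : Finset (Fin n)), condExp P e G S) * z ^ k
      = (1 + z) ^ n *
        ∑ ω : ∀ i, Ω i, G ω *
          ∏ i, (z * (if ω i = e i then (1 : ℝ) else 0) + P i (ω i)) / (1 + z) := by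
  have h1z : (1 + z) ≠ 0 := by positivity
  -- simplify RHS: cancel (1+z)^n
  have hRHS : (1 + z) ^ n *
        ∑ ω : ∀ i, Ω i, G ω *
          ∏ i, (z * (if ω i = e i then (1 : ℝ) else 0) + P i (ω i)) / (1 + z)
      = ∑ ω : ∀ i, Ω i, G ω *
          ∏ i, (z * (if ω i = e i then (1 : ℝ) else 0) + P i (ω i)) := by
    rw [Finset.mul_sum]
    refine Finset.sum_congr rfl fun ω _ => ?_
    rw [Finset.prod_div_distrib, Finset.prod_const]
    have hcard : (Finset.univ : Finset (Fin n)).card = n := by simp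
    rw [hcard]
    field_simp
  rw [hRHS]
  -- expand product
  have hexp : ∀ ω : ∀ i, Ω i,
      ∏ i, (z * (if ω i = e i then (1 : ℝ) else 0) + P i (ω i))
      = ∑ S ∈ (Finset.univ : Finset (Fin n)).powerset,
          z ^ S.card * (∏ i ∈ S, if ω i = e i then (1 : ℝ) else 0) * ∏ i ∈ Sᶜ, P i (ω i) := by
    intro ω
    rw [Finset.prod_add]
    refine Finset.sum_congr rfl fun S hS => ?_
    rw [Finset.prod_mul_distrib, Finset.prod_const]
    congr 1
  calc ∑ k ∈ Finset.range (n + 1),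
        (∑ S ∈ Finset.powersetCard k (Finset.univ : Finset (Fin n)), condExp P e G S) * z ^ k
      = ∑ k ∈ Finset.range (n + 1),
        ∑ S ∈ Finset.powersetCard k (Finset.univ : Finset (Fin n)), condExp P e G S * z ^ S.card := by
        refine Finset.sum_congr rfl fun k hk => ?_
        rw [Finset.sum_mul]
        refine Finset.sum_congr rfl fun S hS => ?_
        rw [(Finset.mem_powersetCard.mp hS).2]
    _ = ∑ S ∈ (Finset.univ : Finset (Fin n)).powerset, condExp P e G S * z ^ S.card := by
        rw [Finset.powerset_card_biUnion, Finset.sum_biUnion (fun i _ j _ hij => Finset.pairwise_disjoint_powersetCard _ hij)]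
        simp
    _ = ∑ ω : ∀ i, Ω i, G ω *
          ∏ i, (z * (if ω i = e i then (1 : ℝ) else 0) + P i (ω i)) := by
        simp_rw [hexp, Finset.mul_sum, condExp, Finset.sum_mul]
        rw [Finset.sum_comm]
        refine Finset.sum_congr rfl fun ω _ => Finset.sum_congr rfl fun S _ => ?_
        ring
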